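/- Let H be an n×n real matrix with |h_{ij}| ≤ 1 for all 1 ≤ i,j ≤ n, and suppose there exists ε₀ > 0 such that det((1−ε)I + εH) = (1 + (n−1)ε²)^{n/2} for all ε ∈ (0, ε₀). Then H is a skew-Hadamard matrix, i.e. every entry of H is ±1, HᵀH = nI, and H + Hᵀ = 2I. -/

import Mathlib

open Matrix Polynomial

lemma aux_eval_det_one_add_X_smul {n : ℕ} (B : Matrix (Fin n) (Fin n) ℝ) (ε : ℝ) :
    (Matrix.det (1 + (X : ℝ[X]) • B.map C)).eval ε = Matrix.det (1 + ε • B) := by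
  rw [← coe_evalRingHom, RingHom.map_det]
  congr 1
  ext i j
  by_cases h : i = j <;>
    · simp [h, Matrix.one_apply, Matrix.map_apply, Matrix.add_apply, Matrix.smul_apply,
        RingHom.mapMatrix_apply]
      ring

lemma aux_eval_charpoly {n : ℕ} (M : Matrix (Fin n) (Fin n) ℝ) (x : ℝ) :
    (Matrix.charpoly M).eval x = Matrix.det (x • (1 : Matrix (Fin n) (Fin n) ℝ) - M) := by
  rw [Matrix.charpoly, ← coe_evalRingHom, RingHom.map_det]
  congr 1
  ext i j
  by_cases h : i = j <;>
    simp [h, Matrix.one_apply, Matrix.sub_apply, Matrix.smul_apply, charmatrix_apply_eq,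
      charmatrix_apply_ne]

lemma aux_symm_sq_zero {n : ℕ} (M : Matrix (Fin n) (Fin n) ℝ) (hs : Mᵀ = M)
    (h : M * M = 0) : M = 0 := by
  have ht : Matrix.trace (M * M) = 0 := by rw [h, Matrix.trace_zero]
  have ht2 : ∑ i : Fin n, ∑ j : Fin n, (M i j)^2 = 0 := by
    rw [← ht]
    simp only [Matrix.trace, Matrix.diag, Matrix.mul_apply]
    refine Finset.sum_congr rfl fun i _ => Finset.sum_congr rfl fun j _ => ?_
    have : M j i = M i j := (Matrix.transpose_apply M i j).symm.trans (by rw [hs])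
    rw [this, sq]
  ext i j
  have h1 : ∀ i ∈ Finset.univ, (0:ℝ) ≤ ∑ j : Fin n, (M i j)^2 :=
    fun i _ => Finset.sum_nonneg fun j _ => sq_nonneg _
  have h2 := (Finset.sum_eq_zero_iff_of_nonneg h1).mp ht2 i (Finset.mem_univ i)
  have h3 := (Finset.sum_eq_zero_iff_of_nonneg
    (fun j _ => sq_nonneg (M i j))).mp h2 j (Finset.mem_univ j)
  simpa using pow_eq_zero_iff (n := 2) (by norm_num) |>.mp h3

lemma aux_symm_pow_zero {n : ℕ} (M : Matrix (Fin n) (Fin n) ℝ) (hs : Mᵀ = M) :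
    ∀ m : ℕ, M ^ (2 ^ m) = 0 → M = 0 := by
  intro m
  induction m with
  | zero => simpa using id
  | succ m ih =>
    intro h
    apply ih
    apply aux_symm_sq_zero _ (by rw [Matrix.transpose_pow, hs])
    rw [← pow_add, ← two_mul, ← pow_succ']
    exact h

lemma aux_symm_nilpotent {n : ℕ} (M : Matrix (Fin n) (Fin n) ℝ) (hs : Mᵀ = M)
    {k : ℕ} (h : M ^ k = 0) : M = 0 := by
  apply aux_symm_pow_zero M hs k
  have hle : k ≤ 2 ^ k := Nat.le_of_lt (Nat.lt_two_pow_self (n := k))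
  calc M ^ 2 ^ k = M ^ k * M ^ (2 ^ k - k) := by rw [← pow_add]; congr 1; omega
  _ = 0 := by rw [h, Matrix.zero_mul]

theorem skew_hadamard_of_det_eq
    (n : ℕ) (H : Matrix (Fin n) (Fin n) ℝ)
    (hH : ∀ i j, |H i j| ≤ 1)
    (ε₀ : ℝ) (hε₀ : 0 < ε₀)
    (hdet : ∀ ε : ℝ, 0 < ε → ε < ε₀ →
      ((1 - ε) • (1 : Matrix (Fin n) (Fin n) ℝ) + ε • H).det
        = (1 + ((n : ℝ) - 1) * ε ^ 2) ^ ((n : ℝ) / 2)) :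
    (∀ i j, H i j = 1 ∨ H i j = -1)
      ∧ Hᵀ * H = (n : ℝ) • (1 : Matrix (Fin n) (Fin n) ℝ)
      ∧ H + Hᵀ = (2 : ℝ) • (1 : Matrix (Fin n) (Fin n) ℝ) := by
  rcases Nat.eq_zero_or_pos n with hn0 | hn1
  · subst hn0
    exact ⟨fun i => i.elim0, Subsingleton.elim _ _, Subsingleton.elim _ _⟩
  have hn1' : (1:ℝ) ≤ (n:ℝ) := by exact_mod_cast hn1
  set c : ℝ := (n : ℝ) - 1 with hc
  have hc0 : 0 ≤ c := by rw [hc]; linarith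
  set A : Matrix (Fin n) (Fin n) ℝ := H - 1 with hA
  have key : ∀ ε : ℝ, 0 < ε → ε < ε₀ →
      Matrix.det (1 + ε • A) = (1 + c * ε ^ 2) ^ ((n : ℝ) / 2) := by
    intro ε h1 h2
    have h3 := hdet ε h1 h2
    have h4 : (1 - ε) • (1 : Matrix (Fin n) (Fin n) ℝ) + ε • H = 1 + ε • A := by
      rw [hA, smul_sub, sub_smul, one_smul]; abel
    rw [← h4]; exact h3
  have hbase : ∀ ε : ℝ, (0:ℝ) ≤ 1 + c * ε ^ 2 := by
    intro ε
    nlinarith [mul_nonneg hc0 (sq_nonneg ε)]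
  set D : ℝ[X] := Matrix.det (1 + (X : ℝ[X]) • A.map C) with hD
  set D₂ : ℝ[X] := Matrix.det (1 + (X : ℝ[X]) • (-A).map C) with hD₂
  set Rp : ℝ[X] := (1 + C c * X ^ 2) ^ n with hRp
  have hRpeval : ∀ ε : ℝ, Rp.eval ε = (1 + c * ε ^ 2) ^ n := by
    intro ε; simp [hRp]
  have hsq : ∀ ε : ℝ, 0 < ε → ε < ε₀ →
      Matrix.det (1 + ε • A) ^ 2 = (1 + c * ε ^ 2) ^ n := by
    intro ε h1 h2
    rw [key ε h1 h2, ← Real.rpow_natCast ((1 + c * ε ^ 2) ^ ((n:ℝ)/2)) 2,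
      ← Real.rpow_mul (hbase ε), ← Real.rpow_natCast (1 + c * ε ^ 2) n]
    norm_num
  have hDsq : D ^ 2 = Rp := by
    have hzero : D ^ 2 - Rp = 0 := by
      apply Polynomial.eq_zero_of_infinite_isRoot
      apply Set.Infinite.mono (s := Set.Ioo (0:ℝ) ε₀) _ (Set.Ioo_infinite hε₀)
      intro ε hε
      have h1 := hsq ε hε.1 hε.2
      simp only [Set.mem_setOf_eq, Polynomial.IsRoot, Polynomial.eval_sub, Polynomial.eval_pow,
        hRpeval]
      rw [hD, aux_eval_det_one_add_X_smul, h1, sub_self]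
    exact sub_eq_zero.mp hzero
  have hD₂eval : ∀ ε : ℝ, D₂.eval ε = Matrix.det (1 - ε • A) := by
    intro ε
    rw [hD₂, aux_eval_det_one_add_X_smul]
    congr 1
    rw [smul_neg, ← sub_eq_add_neg]
  have hD₂sq : D₂ ^ 2 = Rp := by
    have hzero : D₂ ^ 2 - Rp = 0 := by
      apply Polynomial.eq_zero_of_infinite_isRoot
      apply Set.Infinite.mono (s := Set.Ioo (-ε₀) (0:ℝ)) _ (Set.Ioo_infinite (by linarith))
      intro ε hε
      have h1 := hsq (-ε) (by simpa using hε.2) (by have := hε.1; linarith)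
      simp only [Set.mem_setOf_eq, Polynomial.IsRoot, Polynomial.eval_sub, Polynomial.eval_pow,
        hRpeval]
      rw [hD₂eval]
      have h2 : (1:Matrix (Fin n) (Fin n) ℝ) - ε • A = 1 + (-ε) • A := by
        rw [neg_smul, ← sub_eq_add_neg]
      rw [h2, h1]
      ring_nf
    exact sub_eq_zero.mp hzero
  have hDD₂ : D₂ = D := by
    have hfac : (D₂ - D) * (D₂ + D) = 0 := by linear_combination hD₂sq - hDsq
    rcases mul_eq_zero.mp hfac with h | h
    · exact sub_eq_zero.mp h
    · exfalso
      have h0 : D₂.eval 0 + D.eval 0 = 0 := by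
        rw [← Polynomial.eval_add, h, Polynomial.eval_zero]
      rw [hD₂eval, hD, aux_eval_det_one_add_X_smul] at h0
      simp at h0
  -- trace of A is zero
  have htrA : Matrix.trace A = 0 := by
    have h1 : D.coeff 1 = Matrix.trace A := by
      rw [hD]; exact Matrix.coeff_det_one_add_X_smul_one A
    have h2 : D₂.coeff 1 = Matrix.trace (-A) := by
      rw [hD₂]; exact Matrix.coeff_det_one_add_X_smul_one (-A)
    rw [hDD₂, h1, Matrix.trace_neg] at h2
    linarith
  -- diagonal of H is 1
  have hdiag : ∀ i, H i i = 1 := by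
    have hsum : ∑ i : Fin n, (1 - H i i) = 0 := by
      have h1 : ∑ i : Fin n, (H i i - 1) = 0 := by
        rw [← htrA]
        simp [Matrix.trace, Matrix.diag, hA, Matrix.sub_apply, Matrix.one_apply]
      have h2 : ∑ i : Fin n, (1 - H i i) = -∑ i : Fin n, (H i i - 1) := by
        rw [← Finset.sum_neg_distrib]
        exact Finset.sum_congr rfl fun i _ => by ring
      rw [h2, h1, neg_zero]
    intro i
    have h3 := (Finset.sum_eq_zero_iff_of_nonneg
      (fun i _ => by linarith [(abs_le.mp (hH i i)).2] : ∀ i ∈ Finset.univ, (0:ℝ) ≤ 1 - H i i)).mp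
      hsum i (Finset.mem_univ i)
    linarith
  have hdiagA : ∀ i, A i i = 0 := by
    intro i
    rw [hA]
    simp [Matrix.sub_apply, Matrix.one_apply, hdiag i]
  -- charpoly of S = A * A
  set S : Matrix (Fin n) (Fin n) ℝ := A * A with hS
  have hcharS : Matrix.charpoly S = (X + C c) ^ n := by
    have hzero : Matrix.charpoly S - (X + C c) ^ n = 0 := by
      apply Polynomial.eq_zero_of_infinite_isRoot
      apply Set.Infinite.mono (s := (fun s : ℝ => s⁻¹ ^ 2) '' Set.Ioo (0:ℝ) ε₀)
      · rintro x ⟨s, hs, rfl⟩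
        have hs0 : s ≠ 0 := ne_of_gt hs.1
        have hxs : s⁻¹ ^ 2 * s ^ 2 = 1 := by
          field_simp
        simp only [Set.mem_setOf_eq, Polynomial.IsRoot, Polynomial.eval_sub, Polynomial.eval_pow,
          Polynomial.eval_add, Polynomial.eval_X, Polynomial.eval_C]
        rw [aux_eval_charpoly]
        have e1 : (1 - s • A) * (1 + s • A) = 1 - s ^ 2 • S := by
          have e0 : (s • A) * (s • A) = s ^ 2 • S := by
            rw [Matrix.smul_mul, Matrix.mul_smul, smul_smul, sq, hS]
          rw [sub_mul, one_mul, mul_add, mul_one, e0]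
          abel
        have e2 : (s⁻¹ ^ 2) • (1 : Matrix (Fin n) (Fin n) ℝ) - S
            = (s⁻¹ ^ 2) • ((1 - s • A) * (1 + s • A)) := by
          rw [e1, smul_sub, smul_smul, hxs, one_smul]
        rw [e2, Matrix.det_smul, Matrix.det_mul]
        have e3 : Matrix.det (1 - s • A) = D.eval s := by
          rw [← hD₂eval, hDD₂]
        have e4 : Matrix.det (1 + s • A) = D.eval s := by
          rw [hD, aux_eval_det_one_add_X_smul]
        have e5 : D.eval s * D.eval s = (1 + c * s ^ 2) ^ n := by
          rw [← sq, ← Polynomial.eval_pow, hDsq, hRpeval]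
        rw [e3, e4, e5, Fintype.card_fin, ← mul_pow]
        have e6 : s⁻¹ ^ 2 * (1 + c * s ^ 2) = s⁻¹ ^ 2 + c := by
          have e7 : s⁻¹ ^ 2 * (c * s ^ 2) = c * (s⁻¹ ^ 2 * s ^ 2) := by ring
          rw [mul_add, mul_one, e7, hxs, mul_one]
        rw [e6, sub_self]
      · apply Set.Infinite.image
        · intro a ha b hb hab
          simp only at hab
          have ha0 : 0 < a := ha.1
          have hb0 : 0 < b := hb.1
          field_simp at hab
          nlinarith
        · exact Set.Ioo_infinite hε₀
    exact sub_eq_zero.mp hzero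
  -- trace of S
  haveI : Nonempty (Fin n) := ⟨⟨0, hn1⟩⟩
  have htrS : Matrix.trace S = -((n : ℝ) * c) := by
    have h1 := Matrix.trace_eq_neg_charpoly_coeff S
    rw [hcharS, Fintype.card_fin] at h1
    rw [h1, Polynomial.coeff_X_add_C_pow]
    have h2 : n - (n - 1) = 1 := by omega
    have h3 : n.choose (n - 1) = n := by
      rw [← Nat.choose_symm (Nat.sub_le n 1), Nat.sub_sub_self hn1, Nat.choose_one_right]
    rw [h2, h3, pow_one]
    ring
  -- off-diagonal products
  have habsA : ∀ i j, |A i j| ≤ 1 := by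
    intro i j
    by_cases h : i = j
    · subst h; rw [hdiagA]; norm_num
    · rw [hA]; simpa [Matrix.sub_apply, Matrix.one_apply, h] using hH i j
  have hterm : ∀ i j, i ≠ j → A i j * A j i = -1 := by
    have hgsum : ∑ i : Fin n, ∑ j : Fin n,
        (if i = j then (0:ℝ) else 1 + A i j * A j i) = 0 := by
      have hg_eq : ∀ i j : Fin n, (if i = j then (0:ℝ) else 1 + A i j * A j i)
          = (if i = j then (0:ℝ) else 1) + A i j * A j i := by
        intro i j
        by_cases h : i = j
        · subst h; simp [hdiagA]
        · simp [h]
      have hsum1 : ∀ i : Fin n, ∑ j : Fin n, (if i = j then (0:ℝ) else 1) = (n:ℝ) - 1 := by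
        intro i
        have h4 : ∀ j : Fin n, (if i = j then (0:ℝ) else 1)
            = 1 - (if i = j then (1:ℝ) else 0) := by
          intro j; by_cases h : i = j <;> simp [h]
        simp_rw [h4]
        rw [Finset.sum_sub_distrib, Finset.sum_const, Finset.card_univ, Fintype.card_fin,
          Finset.sum_ite_eq, if_pos (Finset.mem_univ i)]
        simp
      have htrS' : ∑ i : Fin n, ∑ j : Fin n, A i j * A j i = -((n:ℝ) * c) := by
        rw [← htrS]
        simp [Matrix.trace, Matrix.diag, hS, Matrix.mul_apply]
      simp_rw [hg_eq]
      have hsplit : ∑ i : Fin n, ∑ j : Fin n, ((if i = j then (0:ℝ) else 1) + A i j * A j i)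
          = (∑ i : Fin n, ∑ j : Fin n, (if i = j then (0:ℝ) else 1))
            + ∑ i : Fin n, ∑ j : Fin n, A i j * A j i := by
        rw [← Finset.sum_add_distrib]
        exact Finset.sum_congr rfl fun i _ => by rw [← Finset.sum_add_distrib]
      rw [hsplit, htrS']
      simp_rw [hsum1]
      rw [Finset.sum_const, Finset.card_univ, Fintype.card_fin, nsmul_eq_mul, hc]
      ring
    intro i j hij
    have hnn : ∀ i j : Fin n, (0:ℝ) ≤ (if i = j then (0:ℝ) else 1 + A i j * A j i) := by
      intro i j
      by_cases h : i = j
      · simp [h]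
      · rw [if_neg h]
        have h1 : |A i j * A j i| ≤ 1 := by
          rw [abs_mul]
          exact mul_le_one₀ (habsA i j) (abs_nonneg _) (habsA j i)
        linarith [neg_abs_le (A i j * A j i)]
    have h0 := (Finset.sum_eq_zero_iff_of_nonneg
      (fun i _ => Finset.sum_nonneg fun j _ => hnn i j)).mp hgsum i (Finset.mem_univ i)
    have h1 := (Finset.sum_eq_zero_iff_of_nonneg
      (fun j _ => hnn i j)).mp h0 j (Finset.mem_univ j)
    rw [if_neg hij] at h1
    linarith
  -- entries are ±1 off-diagonal, and skewness
  have habs1 : ∀ i j, i ≠ j → |A i j| = 1 := by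
    intro i j hij
    have h1 := hterm i j hij
    have h2 : |A i j| * |A j i| = 1 := by rw [← abs_mul, h1]; norm_num
    have h3 := habsA i j
    have h4 := habsA j i
    have h5 : 0 ≤ |A i j| := abs_nonneg _
    have h6 : 0 ≤ |A j i| := abs_nonneg _
    nlinarith
  have hskewE : ∀ i j, i ≠ j → A j i = -A i j := by
    intro i j hij
    have h1 := hterm i j hij
    have h2 : A i j ^ 2 = 1 := by
      have h7 := habs1 i j hij
      nlinarith [sq_abs (A i j)]
    have h3 : A i j * (A i j * A j i) = A i j * (-1) := by rw [h1]
    rw [← mul_assoc, ← sq, h2, one_mul] at h3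
    linarith
  have hskew : Aᵀ = -A := by
    ext i j
    rw [Matrix.transpose_apply, Matrix.neg_apply]
    by_cases h : i = j
    · subst h; rw [hdiagA]; norm_num
    · exact hskewE i j h
  -- Cayley-Hamilton
  have hCH := Matrix.aeval_self_charpoly S
  rw [hcharS] at hCH
  have hNpow : (S + c • 1) ^ n = 0 := by
    rw [← hCH, map_pow, map_add, Polynomial.aeval_X, Polynomial.aeval_C,
      Algebra.algebraMap_eq_smul_one]
  have hNsym : (S + c • 1)ᵀ = S + c • 1 := by
    rw [Matrix.transpose_add, Matrix.transpose_smul, Matrix.transpose_one, hS,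
      Matrix.transpose_mul, hskew, neg_mul_neg]
  have hN0 : S + c • 1 = 0 := aux_symm_nilpotent _ hNsym hNpow
  have hSS : S = -(c • (1 : Matrix (Fin n) (Fin n) ℝ)) := eq_neg_of_add_eq_zero_left hN0
  -- final assembly
  have hHA : H = 1 + A := by rw [hA]; abel
  have hHT : Hᵀ = 1 - A := by
    rw [hHA, Matrix.transpose_add, Matrix.transpose_one, hskew, sub_eq_add_neg]
  refine ⟨?_, ?_, ?_⟩
  · intro i j
    by_cases h : i = j
    · subst h; left; exact hdiag i
    · have h1 := habs1 i j h
      have h2 : A i j = H i j := by rw [hA]; simp [Matrix.sub_apply, Matrix.one_apply, h]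
      rw [h2] at h1
      exact (abs_eq (by norm_num : (0:ℝ) ≤ 1)).mp h1
  · have e : (1 - A) * (1 + A) = 1 - S := by
      rw [hS, sub_mul, one_mul, mul_add, mul_one]
      abel
    rw [hHT]
    nth_rewrite 1 [hHA]
    rw [e, hSS, sub_neg_eq_add]
    have e2 : (1 : Matrix (Fin n) (Fin n) ℝ) + c • 1 = ((1:ℝ) + c) • 1 := by
      rw [add_smul, one_smul]
    rw [e2]
    congr 1
    rw [hc]
    ring
  · rw [hHT, hHA, two_smul]
    abel
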